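/- arXiv:1402.4697 — 2 statements merged into one kernel-verified Lean document; each statement's English description precedes it below -/
import Mathlib

section
/- Let ω be an arbitrary modulus of continuity, E ⊆ 𝕋 closed, and g ∈ I_ω(E). Let (Δ_n) be a sequence in Ω_E with Δ_n ⊆ Δ_{n+1} for all n and ∪_n Δ_n = 𝕋\E, and let (h_n) ⊂ H^∞ satisfy: (i) sup_n ‖h_n‖_∞ < ∞; (ii) each h_n extends both to a continuous function on the closed disk minus E and to an analytic function across Δ_n; (iii) for each p, the sequences (h_n)_{n≥p} and (h_n')_{n≥p} converge uniformly to 0 on every compact subset of Δ_p. Then, for each n, g·h_n ∈ I_ω(E) if and only if sup_{ξ≠ζ∈𝕋\E} |g(ξ)|·|h_n(ξ)−h_n(ζ)|/ω(|ξ−ζ|) < ∞. -/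
open Complex Metric Set MeasureTheory Filter

noncomputable section

/-- A modulus of continuity: nonnegative, nondecreasing, continuous on `[0,2]`,
vanishing at `0`, not identically zero, with `t ↦ ω t / t` nonincreasing. -/
structure ModulusOfContinuity where
  toFun : ℝ → ℝ
  nonneg : ∀ t ∈ Set.Icc (0:ℝ) 2, 0 ≤ toFun t
  mono : MonotoneOn toFun (Set.Icc (0:ℝ) 2)
  cont : ContinuousOn toFun (Set.Icc (0:ℝ) 2)
  zero : toFun 0 = 0
  nontrivial : ∃ t ∈ Set.Icc (0:ℝ) 2, toFun t ≠ 0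
  quot_anti : AntitoneOn (fun t => toFun t / t) (Set.Ioc (0:ℝ) 2)

instance : CoeFun ModulusOfContinuity (fun _ => ℝ → ℝ) := ⟨ModulusOfContinuity.toFun⟩

/-- The condition `inf_{0<t≤1} ω(t²)/ω(t) > 0`. -/
def EtaPos (ω : ModulusOfContinuity) : Prop :=
  ∃ η > (0:ℝ), ∀ t ∈ Set.Ioc (0:ℝ) 1, η * ω t ≤ ω (t ^ 2)

/-- Membership in `H^∞`: bounded analytic on the open unit disk. -/
def MemHinf (f : ℂ → ℂ) : Prop :=
  DifferentiableOn ℂ f (ball (0:ℂ) 1) ∧ ∃ M : ℝ, ∀ z ∈ ball (0:ℂ) 1, ‖f z‖ ≤ M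

/-- Membership in the big Lipschitz algebra `Lip_ω` (boundary form, by Tamrazov's theorem):
continuous on the closed disk, analytic in the open disk, and `ω`-Lipschitz on the circle. -/
def MemLip (ω : ModulusOfContinuity) (f : ℂ → ℂ) : Prop :=
  ContinuousOn f (closedBall (0:ℂ) 1) ∧ DifferentiableOn ℂ f (ball (0:ℂ) 1) ∧
    ∃ C : ℝ, ∀ ξ ∈ sphere (0:ℂ) 1, ∀ ζ ∈ sphere (0:ℂ) 1, ξ ≠ ζ →
      ‖f ξ - f ζ‖ ≤ C * ω (‖ξ - ζ‖)

/-- Supremum norm over the closed unit disk. -/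
def supNorm (f : ℂ → ℂ) : ℝ :=
  sSup ((fun z => ‖f z‖) '' closedBall (0:ℂ) 1)

/-- The `ω`-Lipschitz seminorm on the unit circle. -/
def lipSemi (ω : ModulusOfContinuity) (f : ℂ → ℂ) : ℝ :=
  sSup ((fun p : ℂ × ℂ => ‖f p.1 - f p.2‖ / ω (‖p.1 - p.2‖)) ''
    {p : ℂ × ℂ | p.1 ∈ sphere (0:ℂ) 1 ∧ p.2 ∈ sphere (0:ℂ) 1 ∧ p.1 ≠ p.2})

/-- The norm `‖f‖_ω = ‖f‖_∞ + sup_{ξ≠ζ∈𝕋} |f ξ - f ζ|/ω(|ξ-ζ|)`. -/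
def lipNorm (ω : ModulusOfContinuity) (f : ℂ → ℂ) : ℝ := supNorm f + lipSemi ω f

/-- A closed ideal of the Banach algebra `Lip_ω`. -/
structure ClosedIdealLip (ω : ModulusOfContinuity) where
  carrier : Set (ℂ → ℂ)
  mem_lip : ∀ f ∈ carrier, MemLip ω f
  add_mem : ∀ f ∈ carrier, ∀ g ∈ carrier, (fun z => f z + g z) ∈ carrier
  smul_mem : ∀ (c : ℂ), ∀ f ∈ carrier, (fun z => c * f z) ∈ carrier
  mul_mem : ∀ f ∈ carrier, ∀ g, MemLip ω g → (fun z => f z * g z) ∈ carrier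
  closed_mem : ∀ f, MemLip ω f →
    (∀ ε > (0:ℝ), ∃ g ∈ carrier, lipNorm ω (fun z => f z - g z) ≤ ε) → f ∈ carrier

/-- The hull `E_I = {ξ ∈ 𝕋 : f ξ = 0 for all f ∈ I}`. -/
def hullSet (I : Set (ℂ → ℂ)) : Set ℂ :=
  {ξ | ξ ∈ sphere (0:ℂ) 1 ∧ ∀ f ∈ I, f ξ = 0}

/-- `E(δ) = {ξ ∈ 𝕋 : d(ξ,E) ≤ δ}`. -/
def ENbhd (E : Set ℂ) (δ : ℝ) : Set ℂ :=
  {ξ | ξ ∈ sphere (0:ℂ) 1 ∧ Metric.infDist ξ E ≤ δ}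

/-- The condition `lim_{δ→0} sup_{ξ≠ζ∈E(δ)} |f ξ - f ζ|/ω(|ξ-ζ|) = 0`. -/
def JCond (ω : ModulusOfContinuity) (E : Set ℂ) (f : ℂ → ℂ) : Prop :=
  ∀ ε > (0:ℝ), ∃ δ > (0:ℝ), ∀ ξ ∈ ENbhd E δ, ∀ ζ ∈ ENbhd E δ, ξ ≠ ζ →
    ‖f ξ - f ζ‖ ≤ ε * ω (‖ξ - ζ‖)

/-- `I_ω(E)`. -/
def MemI (ω : ModulusOfContinuity) (E : Set ℂ) (f : ℂ → ℂ) : Prop :=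
  MemLip ω f ∧ ∀ ξ ∈ E, f ξ = 0

/-- `J_ω(E)`. -/
def MemJ (ω : ModulusOfContinuity) (E : Set ℂ) (f : ℂ → ℂ) : Prop :=
  MemI ω E f ∧ JCond ω E f

/-- `u` divides `f` in `H^∞`: `f / u ∈ H^∞`. -/
def DividesIn (u f : ℂ → ℂ) : Prop :=
  ∃ h : ℂ → ℂ, MemHinf h ∧ ∀ z ∈ ball (0:ℂ) 1, f z = u z * h z

/-- An inner function: bounded by 1, analytic on the disk, with radial limits of
modulus 1 at almost every boundary point. -/
def IsInner (u : ℂ → ℂ) : Prop :=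
  DifferentiableOn ℂ u (ball (0:ℂ) 1) ∧ (∀ z ∈ ball (0:ℂ) 1, ‖u z‖ ≤ 1) ∧
  ∀ᵐ (θ : ℝ) ∂(volume : Measure ℝ),
    Tendsto (fun r : ℝ => ‖u ((r : ℂ) * Complex.exp ((θ : ℂ) * Complex.I))‖)
      (nhdsWithin 1 (Set.Iio 1)) (nhds 1)

/-- `U` is the greatest common inner divisor of the inner parts of the nonzero members of `I`. -/
def IsGcdInner (I : Set (ℂ → ℂ)) (U : ℂ → ℂ) : Prop :=
  IsInner U ∧ (∀ f ∈ I, f ≠ 0 → DividesIn U f) ∧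
  ∀ W : ℂ → ℂ, IsInner W → (∀ f ∈ I, f ≠ 0 → DividesIn W f) → DividesIn W U

/-- `J_ω(E, U)`. -/
def MemJU (ω : ModulusOfContinuity) (E : Set ℂ) (U : ℂ → ℂ) (f : ℂ → ℂ) : Prop :=
  MemLip ω f ∧ (∀ ξ ∈ E, f ξ = 0) ∧ DividesIn U f ∧ JCond ω E f

/-- `E ⊆ 𝕋` has zero Lebesgue (arclength) measure. -/
def CircNull (E : Set ℂ) : Prop :=
  volume {θ : ℝ | θ ∈ Set.Ico (0:ℝ) (2 * Real.pi) ∧ Complex.exp ((θ : ℂ) * Complex.I) ∈ E} = 0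

/-- The spectrum `σ(U) = {λ ∈ 𝔻̄ : liminf_{z→λ, z∈𝔻} |U z| = 0}`. -/
def innerSpec (U : ℂ → ℂ) : Set ℂ :=
  {l | l ∈ closedBall (0:ℂ) 1 ∧
    Filter.liminf (fun z => ‖U z‖) (nhdsWithin l (ball (0:ℂ) 1)) = 0}

/-- An outer function: `F z = c · exp((1/2π) ∫ (e^{iθ}+z)/(e^{iθ}-z) w(θ) dθ)`
with `|c| = 1` and `w` integrable. -/
def IsOuter (F : ℂ → ℂ) : Prop :=
  ∃ c : ℂ, ‖c‖ = 1 ∧ ∃ w : ℝ → ℝ,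
    IntervalIntegrable w volume 0 (2 * Real.pi) ∧
    ∀ z ∈ ball (0:ℂ) 1, F z = c * Complex.exp ((1 / (2 * Real.pi) : ℂ) *
      ∫ θ in (0:ℝ)..(2 * Real.pi),
        ((Complex.exp ((θ : ℂ) * Complex.I) + z) / (Complex.exp ((θ : ℂ) * Complex.I) - z)) *
          (w θ : ℂ))

/-- Boundary zero set `E_f = {ξ ∈ 𝕋 : f ξ = 0}`. -/
def bdryZeroSet (f : ℂ → ℂ) : Set ℂ := {ξ | ξ ∈ sphere (0:ℂ) 1 ∧ f ξ = 0}

/-- `Δ ∈ Ω_E`: `Δ` is a union of connected components (complementary arcs) of `𝕋 \ E`. -/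
def MemOmega (E : Set ℂ) (Δ : Set ℂ) : Prop :=
  Δ ⊆ sphere (0:ℂ) 1 \ E ∧
  ∀ z ∈ Δ, connectedComponentIn (sphere (0:ℂ) 1 \ E) z ⊆ Δ

/-- The Korenblum outer function
`f_Γ z = exp((1/2π) ∫_Γ (ξ+z)/(ξ-z) log|f ξ| |dξ|)`. -/
def korenblum (f : ℂ → ℂ) (Γ : Set ℂ) (z : ℂ) : ℂ :=
  Complex.exp ((1 / (2 * Real.pi) : ℂ) *
    ∫ θ in (0:ℝ)..(2 * Real.pi),
      Set.indicator Γ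
        (fun ξ => ((ξ + z) / (ξ - z)) * (Real.log (‖f ξ‖) : ℂ))
        (Complex.exp ((θ : ℂ) * Complex.I)))

/-- A singular inner function with associated positive singular measure `μ`
(carried by `[0,2π)` via `θ ↦ e^{iθ}`). -/
def IsSingularInnerWith (S : ℂ → ℂ) (μ : Measure ℝ) : Prop :=
  μ Set.univ < ⊤ ∧ μ (Set.Ico (0:ℝ) (2 * Real.pi))ᶜ = 0 ∧
  μ.MutuallySingular volume ∧
  ∀ z ∈ ball (0:ℂ) 1, S z = Complex.exp (-(1 / (2 * Real.pi) : ℂ) *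
    ∫ θ, ((Complex.exp ((θ : ℂ) * Complex.I) + z) /
      (Complex.exp ((θ : ℂ) * Complex.I) - z)) ∂μ)

/-- Single Blaschke factor with zero `w` (with the conventions that `w = 0` gives the factor
`z`, and `|w| = 1` gives the constant factor `1`, used for padding). -/
def blaschkeFactor (w z : ℂ) : ℂ :=
  if w = 0 then z
  else ((‖w‖ : ℂ) / w) * (w - z) / (1 - (starRingEnd ℂ) w * z)

/-- `B` is the Blaschke product with zero sequence `a` (boundary points of the sequence
serve as padding, contributing factors `1`). -/
def IsBlaschkeOf (B : ℂ → ℂ) (a : ℕ → ℂ) : Prop :=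
  (∀ n, ‖a n‖ ≤ 1) ∧ Summable (fun n => 1 - ‖a n‖) ∧
  ∀ z ∈ ball (0:ℂ) 1, HasProd (fun n => blaschkeFactor (a n) z) (B z)

/-- Total-variation distance between two (finite) measures. -/
def tvDist (μ ν : Measure ℝ) : ℝ :=
  sSup {r : ℝ | ∃ s : Set ℝ, MeasurableSet s ∧ r = |(μ s).toReal - (ν s).toReal|}

/-- The function `z ↦ exp(-(1/2π) ∫ (e^{iθ}+z)/(e^{iθ}-z) dμ(θ))`, defining a singular
inner function on the disk together with its analytic extension off the support of `μ`. -/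
def singExp (μ : Measure ℝ) (z : ℂ) : ℂ :=
  Complex.exp (-(1 / (2 * Real.pi) : ℂ) *
    ∫ θ, ((Complex.exp ((θ : ℂ) * Complex.I) + z) /
      (Complex.exp ((θ : ℂ) * Complex.I) - z)) ∂μ)

/-- `a_U(ζ) = Σ_n (1-|z_n|²)/|ζ-z_n|² + (1/π) ∫ |e^{iθ}-ζ|⁻² dμ(θ)` for an inner function
with zeros `a` and singular measure `μ`. -/
def aFun (a : ℕ → ℂ) (μ : Measure ℝ) (ζ : ℂ) : ℝ :=
  (∑' n, (1 - ‖a n‖ ^ 2) / ‖ζ - a n‖ ^ 2) +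
  (1 / Real.pi) * ∫ θ, (1 / ‖Complex.exp ((θ : ℂ) * Complex.I) - ζ‖ ^ 2) ∂μ


/-- Auxiliary: a function continuous on `closedBall 0 1 \ E` (with `E ⊆ sphere`) and
bounded by `M` on the open ball is bounded by `M` on `sphere \ E` as well. -/
lemma aux_sphere_bound {hh : ℂ → ℂ} {E : Set ℂ} {M : ℝ} (hEsub : E ⊆ sphere (0:ℂ) 1)
    (hc : ContinuousOn hh (closedBall (0:ℂ) 1 \ E))
    (hM : ∀ z ∈ ball (0:ℂ) 1, ‖hh z‖ ≤ M)
    {ζ : ℂ} (hζ : ζ ∈ sphere (0:ℂ) 1 \ E) : ‖hh ζ‖ ≤ M := by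
  have hζcb : ζ ∈ closedBall (0:ℂ) 1 \ E :=
    ⟨Metric.sphere_subset_closedBall hζ.1, hζ.2⟩
  have habs : ‖ζ‖ = 1 := by
    have := hζ.1
    simpa [Complex.dist_eq] using this
  have hmemIoo : ∀ r ∈ Set.Ioo (0:ℝ) 1, (r:ℂ) * ζ ∈ ball (0:ℂ) 1 := by
    intro r hr
    simp only [mem_ball, Complex.dist_eq, sub_zero, norm_mul, Complex.norm_real, Real.norm_eq_abs, habs,
      mul_one, abs_of_pos hr.1]
    exact hr.2
  have hT : Tendsto (fun r : ℝ => (r:ℂ) * ζ) (nhdsWithin 1 (Set.Iio 1))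
      (nhdsWithin ζ (closedBall (0:ℂ) 1 \ E)) := by
    rw [tendsto_nhdsWithin_iff]
    constructor
    · have : Tendsto (fun r : ℝ => (r:ℂ) * ζ) (nhds 1) (nhds ((1:ℂ) * ζ)) := by
        exact ((Complex.continuous_ofReal.tendsto 1).mul tendsto_const_nhds)
      simpa using this.mono_left nhdsWithin_le_nhds
    · filter_upwards [Ioo_mem_nhdsLT_of_mem (by norm_num : (1:ℝ) ∈ Set.Ioc 0 1)] with r hr
      have hb := hmemIoo r hr
      refine ⟨ball_subset_closedBall hb, fun hE => ?_⟩
      have := hEsub hE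
      simp only [mem_sphere_iff_norm, sub_zero] at this
      have : ‖(r:ℂ) * ζ‖ = 1 := by simpa using this
      rw [norm_mul, Complex.norm_real, Real.norm_eq_abs, habs, mul_one, abs_of_pos hr.1] at this
      exact absurd this (ne_of_lt hr.2)
  have htend : Tendsto (fun r : ℝ => ‖hh ((r:ℂ) * ζ)‖)
      (nhdsWithin 1 (Set.Iio 1)) (nhds (‖hh ζ‖)) :=
    (continuous_norm.tendsto _).comp ((hc ζ hζcb).tendsto.comp hT)
  refine le_of_tendsto htend ?_
  filter_upwards [Ioo_mem_nhdsLT_of_mem (by norm_num : (1:ℝ) ∈ Set.Ioc 0 1)] with r hr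
  exact hM _ (hmemIoo r hr)

/-- **Lemma (hilbert), first part.** Under the stated hypotheses on `(Δ_n)` and `(h_n)`,
`g·h_n ∈ I_ω(E)` if and only if the weighted difference quotients of `h_n` against `g`
are bounded on `𝕋 \ E`. -/
theorem hilbert_lemma_Ipart
    (ω : ModulusOfContinuity)
    (E : Set ℂ) (hEsub : E ⊆ sphere (0:ℂ) 1) (hEclosed : IsClosed E)
    (g : ℂ → ℂ) (hg : MemI ω E g)
    (Δ : ℕ → Set ℂ) (hΔ : ∀ n, MemOmega E (Δ n))
    (hΔmono : ∀ n, Δ n ⊆ Δ (n + 1))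
    (hΔunion : (⋃ n, Δ n) = sphere (0:ℂ) 1 \ E)
    (h : ℕ → ℂ → ℂ)
    (hbdd : ∃ M : ℝ, ∀ n, ∀ z ∈ ball (0:ℂ) 1, ‖h n z‖ ≤ M)
    (hcont : ∀ n, ContinuousOn (h n) (closedBall (0:ℂ) 1 \ E))
    (hanal : ∀ n, ∃ O : Set ℂ, IsOpen O ∧ ball (0:ℂ) 1 ∪ Δ n ⊆ O ∧
      DifferentiableOn ℂ (h n) O)
    (hconv : ∀ p : ℕ, ∀ K ⊆ Δ p, IsCompact K →
      TendstoUniformlyOn (fun n => h n) 0 atTop K ∧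
      TendstoUniformlyOn (fun n => deriv (h n)) 0 atTop K) :
    ∀ n, MemI ω E (fun z => g z * h n z) ↔
      ∃ C : ℝ, ∀ ξ ∈ sphere (0:ℂ) 1 \ E, ∀ ζ ∈ sphere (0:ℂ) 1 \ E, ξ ≠ ζ →
        ‖g ξ‖ * ‖h n ξ - h n ζ‖ ≤ C * ω (‖ξ - ζ‖) := by
  intro n
  -- basic facts
  obtain ⟨M, hM⟩ := hbdd
  have hM0 : 0 ≤ M := le_trans (norm_nonneg _) (hM n 0 (by simp))
  have hMcb : ∀ w ∈ closedBall (0:ℂ) 1 \ E, ‖h n w‖ ≤ M := by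
    intro w hw
    rcases lt_or_eq_of_le (mem_closedBall.mp hw.1) with hlt | heq
    · exact hM n w (mem_ball.mpr hlt)
    · exact aux_sphere_bound hEsub (hcont n) (hM n) ⟨mem_sphere.mpr heq, hw.2⟩
  have habs2 : ∀ ξ ∈ sphere (0:ℂ) 1, ∀ ζ ∈ sphere (0:ℂ) 1, ‖ξ - ζ‖ ∈ Set.Icc (0:ℝ) 2 := by
    intro ξ hξ ζ hζ
    refine ⟨norm_nonneg _, ?_⟩
    simp only [mem_sphere_iff_norm, sub_zero] at hξ hζ
    calc ‖ξ - ζ‖ ≤ ‖ξ‖ + ‖ζ‖ := norm_sub_le _ _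
      _ = 2 := by rw [hξ, hζ]; norm_num
  have hω0 : ∀ ξ ∈ sphere (0:ℂ) 1, ∀ ζ ∈ sphere (0:ℂ) 1, 0 ≤ ω (‖ξ - ζ‖) :=
    fun ξ hξ ζ hζ => ω.nonneg _ (habs2 ξ hξ ζ hζ)
  obtain ⟨Cg', hCg'⟩ := hg.1.2.2
  set Cg : ℝ := max Cg' 0 with hCgdef
  have hCg0 : 0 ≤ Cg := le_max_right _ _
  have hCg : ∀ ξ ∈ sphere (0:ℂ) 1, ∀ ζ ∈ sphere (0:ℂ) 1, ξ ≠ ζ →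
      ‖g ξ - g ζ‖ ≤ Cg * ω (‖ξ - ζ‖) := by
    intro ξ hξ ζ hζ hne
    exact le_trans (hCg' ξ hξ ζ hζ hne)
      (mul_le_mul_of_nonneg_right (le_max_left _ _) (hω0 ξ hξ ζ hζ))
  constructor
  · rintro ⟨hlip, _⟩
    obtain ⟨C1', hC1'⟩ := hlip.2.2
    refine ⟨max C1' 0 + M * Cg, ?_⟩
    intro ξ hξ ζ hζ hne
    have hω := hω0 ξ hξ.1 ζ hζ.1
    have hC1 : ‖g ξ * h n ξ - g ζ * h n ζ‖ ≤ max C1' 0 * ω (‖ξ - ζ‖) :=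
      le_trans (hC1' ξ hξ.1 ζ hζ.1 hne)
        (mul_le_mul_of_nonneg_right (le_max_left _ _) hω)
    have hdecomp : g ξ * (h n ξ - h n ζ) = (g ξ * h n ξ - g ζ * h n ζ) + (g ζ - g ξ) * h n ζ := by
      ring
    calc ‖g ξ‖ * ‖h n ξ - h n ζ‖
        = ‖g ξ * (h n ξ - h n ζ)‖ := (norm_mul _ _).symm
      _ = ‖(g ξ * h n ξ - g ζ * h n ζ) + (g ζ - g ξ) * h n ζ‖ := by rw [hdecomp]
      _ ≤ ‖g ξ * h n ξ - g ζ * h n ζ‖ + ‖(g ζ - g ξ) * h n ζ‖ :=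
          norm_add_le _ _
      _ ≤ max C1' 0 * ω (‖ξ - ζ‖) + ‖g ζ - g ξ‖ * ‖h n ζ‖ := by
          rw [norm_mul]; exact add_le_add hC1 le_rfl
      _ ≤ max C1' 0 * ω (‖ξ - ζ‖) + (Cg * ω (‖ζ - ξ‖)) * M := by
          refine add_le_add le_rfl (mul_le_mul (hCg ζ hζ.1 ξ hξ.1 hne.symm) (hMcb ζ
            ⟨Metric.sphere_subset_closedBall hζ.1, hζ.2⟩) (norm_nonneg _) ?_)
          exact mul_nonneg hCg0 (hω0 ζ hζ.1 ξ hξ.1)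
      _ = (max C1' 0 + M * Cg) * ω (‖ξ - ζ‖) := by
          rw [norm_sub_rev ζ ξ]; ring
  · rintro ⟨C', hC'⟩
    set C : ℝ := max C' 0 with hCdef
    have hC0 : 0 ≤ C := le_max_right _ _
    have hC : ∀ ξ ∈ sphere (0:ℂ) 1 \ E, ∀ ζ ∈ sphere (0:ℂ) 1 \ E, ξ ≠ ζ →
        ‖g ξ‖ * ‖h n ξ - h n ζ‖ ≤ C * ω (‖ξ - ζ‖) := by
      intro ξ hξ ζ hζ hne
      exact le_trans (hC' ξ hξ ζ hζ hne)
        (mul_le_mul_of_nonneg_right (le_max_left _ _) (hω0 ξ hξ.1 ζ hζ.1))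
    refine ⟨⟨?_, ?_, ?_⟩, ?_⟩
    · -- continuity on the closed ball
      intro z hz
      by_cases hzE : z ∈ E
      · have hgz : g z = 0 := hg.2 z hzE
        have hfz : g z * h n z = 0 := by rw [hgz, zero_mul]
        have hbound : ∀ᶠ w in nhdsWithin z (closedBall (0:ℂ) 1),
            ‖g w * h n w‖ ≤ M * ‖g w‖ := by
          filter_upwards [self_mem_nhdsWithin] with w hw
          by_cases hwE : w ∈ E
          · rw [hg.2 w hwE]; simp
          · rw [norm_mul, mul_comm]
            exact mul_le_mul_of_nonneg_right (hMcb w ⟨hw, hwE⟩) (norm_nonneg _)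
        have hlim : Tendsto (fun w => M * ‖g w‖)
            (nhdsWithin z (closedBall (0:ℂ) 1)) (nhds 0) := by
          have hgc : Tendsto (fun w => ‖g w‖)
              (nhdsWithin z (closedBall (0:ℂ) 1)) (nhds (‖g z‖)) :=
            (continuous_norm.tendsto _).comp
              ((hg.1.1 z hz).tendsto)
          have := tendsto_const_nhds (x := M) |>.mul hgc
          simpa [hgz] using this
        have : Tendsto (fun w => g w * h n w) (nhdsWithin z (closedBall (0:ℂ) 1)) (nhds 0) :=
          squeeze_zero_norm' hbound hlim
        rw [ContinuousWithinAt, hfz]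
        exact this
      · have hmem : closedBall (0:ℂ) 1 \ E ∈ nhdsWithin z (closedBall (0:ℂ) 1) := by
          rw [diff_eq]
          exact inter_mem self_mem_nhdsWithin
            (mem_nhdsWithin_of_mem_nhds (hEclosed.isOpen_compl.mem_nhds hzE))
        have hcw : ContinuousWithinAt (fun w => g w * h n w) (closedBall (0:ℂ) 1 \ E) z :=
          ((hg.1.1.mono diff_subset).mul (hcont n)) z ⟨hz, hzE⟩
        exact hcw.mono_of_mem_nhdsWithin hmem
    · -- differentiability on the ball
      obtain ⟨O, hOopen, hOsub, hOdiff⟩ := hanal n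
      exact hg.1.2.1.mul (hOdiff.mono (Set.subset_union_left.trans hOsub))
    · -- boundary Lipschitz estimate
      refine ⟨C + M * Cg, ?_⟩
      intro ξ hξ ζ hζ hne
      have hω := hω0 ξ hξ ζ hζ
      have hRHS0 : 0 ≤ (C + M * Cg) * ω (‖ξ - ζ‖) :=
        mul_nonneg (by positivity) hω
      by_cases hξE : ξ ∈ E
      · by_cases hζE : ζ ∈ E
        · simp only [hg.2 ξ hξE, hg.2 ζ hζE, zero_mul, sub_zero, norm_zero]
          exact hRHS0
        · have hgξ : g ξ = 0 := hg.2 ξ hξE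
          have : ‖g ξ * h n ξ - g ζ * h n ζ‖ = ‖g ζ - g ξ‖ *
              ‖h n ζ‖ := by
            rw [hgξ]; simp [norm_mul]
          rw [this]
          calc ‖g ζ - g ξ‖ * ‖h n ζ‖
              ≤ (Cg * ω (‖ζ - ξ‖)) * M := by
                refine mul_le_mul (hCg ζ hζ ξ hξ hne.symm)
                  (hMcb ζ ⟨Metric.sphere_subset_closedBall hζ, hζE⟩)
                  (norm_nonneg _) (mul_nonneg hCg0 (hω0 ζ hζ ξ hξ))
            _ ≤ (C + M * Cg) * ω (‖ξ - ζ‖) := by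
                rw [norm_sub_rev ζ ξ]; nlinarith
      · by_cases hζE : ζ ∈ E
        · have hgζ : g ζ = 0 := hg.2 ζ hζE
          have : ‖g ξ * h n ξ - g ζ * h n ζ‖ = ‖g ξ - g ζ‖ *
              ‖h n ξ‖ := by
            rw [hgζ]; simp [norm_mul]
          rw [this]
          calc ‖g ξ - g ζ‖ * ‖h n ξ‖
              ≤ (Cg * ω (‖ξ - ζ‖)) * M := by
                refine mul_le_mul (hCg ξ hξ ζ hζ hne)
                  (hMcb ξ ⟨Metric.sphere_subset_closedBall hξ, hξE⟩)
                  (norm_nonneg _) (mul_nonneg hCg0 hω)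
            _ ≤ (C + M * Cg) * ω (‖ξ - ζ‖) := by nlinarith
        · have hdecomp : g ξ * h n ξ - g ζ * h n ζ = g ξ * (h n ξ - h n ζ) + (g ξ - g ζ) * h n ζ := by
            ring
          calc ‖g ξ * h n ξ - g ζ * h n ζ‖
              ≤ ‖g ξ * (h n ξ - h n ζ)‖ + ‖(g ξ - g ζ) * h n ζ‖ := by
                rw [hdecomp]; exact norm_add_le _ _
            _ = ‖g ξ‖ * ‖h n ξ - h n ζ‖ +
                ‖g ξ - g ζ‖ * ‖h n ζ‖ := by
                rw [norm_mul, norm_mul]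
            _ ≤ C * ω (‖ξ - ζ‖) + (Cg * ω (‖ξ - ζ‖)) * M := by
                refine add_le_add (hC ξ ⟨hξ, hξE⟩ ζ ⟨hζ, hζE⟩ hne) ?_
                exact mul_le_mul (hCg ξ hξ ζ hζ hne)
                  (hMcb ζ ⟨Metric.sphere_subset_closedBall hζ, hζE⟩)
                  (norm_nonneg _) (mul_nonneg hCg0 hω)
            _ = (C + M * Cg) * ω (‖ξ - ζ‖) := by ring
    · intro ξ hξ
      simp [hg.2 ξ hξ]
end
end

section
/- Let ω be an arbitrary modulus of continuity, E ⊆ 𝕋 closed, and g ∈ J_ω(E). Let A = {a_0,…,a_K} be a finite sequence of points of E (not necessarily distinct) and for 0 < ρ ≤ 1 set φ_{ρ,K}(z) = ∏_{k=0}^{K} (z·conj(a_k) − 1)/(z·conj(a_k) − 1 − ρ). Then lim_{ρ→0⁺} ‖φ_{ρ,K}·g − g‖_ω = 0. -/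
open Complex Metric Set MeasureTheory Filter

noncomputable section

namespace Complex

def abs : AbsoluteValue ℂ ℝ where
  toFun z := ‖z‖
  map_mul' := norm_mul
  nonneg' := norm_nonneg
  eq_zero' _ := norm_eq_zero
  add_le' := norm_add_le

lemma norm_eq_abs (z : ℂ) : ‖z‖ = Complex.abs z := rfl

lemma abs_apply (z : ℂ) : Complex.abs z = Real.sqrt (normSq z) := Complex.norm_def z

lemma abs_conj (z : ℂ) : Complex.abs ((starRingEnd ℂ) z) = Complex.abs z := Complex.norm_conj z

lemma abs_ofReal (r : ℝ) : Complex.abs (r : ℂ) = |r| := Complex.norm_real r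

lemma normSq_eq_abs (z : ℂ) : normSq z = Complex.abs z ^ 2 := Complex.normSq_eq_norm_sq z

end Complex

namespace FPA

variable (ω : ModulusOfContinuity)

lemma om_nonneg {t : ℝ} (h1 : 0 ≤ t) (h2 : t ≤ 2) : 0 ≤ ω t := ω.nonneg t ⟨h1, h2⟩

lemma om_mono {s t : ℝ} (hs : 0 ≤ s) (hst : s ≤ t) (ht : t ≤ 2) : ω s ≤ ω t :=
  ω.mono ⟨hs, hst.trans ht⟩ ⟨hs.trans hst, ht⟩ hst

lemma om_pos {t : ℝ} (h0 : 0 < t) (h2 : t ≤ 2) : 0 < ω t := by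
  obtain ⟨t0, ht0, hne⟩ := ω.nontrivial
  have ht00 : 0 < t0 := by
    rcases lt_or_eq_of_le ht0.1 with h | h
    · exact h
    · exfalso; apply hne; rw [← h, ω.zero]
  have ht0pos : 0 < ω t0 := lt_of_le_of_ne (ω.nonneg t0 ht0) (Ne.symm hne)
  rcases le_or_gt t0 t with h | h
  · exact lt_of_lt_of_le ht0pos (om_mono ω ht00.le h h2)
  · have := ω.quot_anti ⟨h0, h2⟩ ⟨ht00, ht0.2⟩ h.le
    have h1 : 0 < ω t0 / t0 := div_pos ht0pos ht00
    have h2' : 0 < ω t / t := lt_of_lt_of_le h1 this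
    rcases div_pos_iff.mp h2' with ⟨h3, _⟩ | ⟨_, h3⟩
    · exact h3
    · linarith


lemma om_quot {s t : ℝ} (hs : 0 < s) (hst : s ≤ t) (ht : t ≤ 2) : ω t * s ≤ ω s * t := by
  have h := ω.quot_anti ⟨hs, hst.trans ht⟩ ⟨hs.trans_le hst, ht⟩ hst
  rwa [div_le_div_iff₀ (hs.trans_le hst) hs] at h

lemma key1 {ρ r : ℝ} (hρ : 0 < ρ) (hρ1 : ρ ≤ 1) (hr0 : 0 ≤ r) (hr2 : r ≤ 2) :
    ρ / max ρ r * ω r ≤ ω (Real.sqrt ρ) := by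
  set q := Real.sqrt ρ with hq
  have hq0 : 0 < q := Real.sqrt_pos.2 hρ
  have hq1 : q ≤ 1 := by
    rw [hq, show (1:ℝ) = Real.sqrt 1 by simp]
    exact Real.sqrt_le_sqrt hρ1
  have hq2 : q ≤ 2 := hq1.trans one_le_two
  have hqq : q * q = ρ := Real.mul_self_sqrt hρ.le
  have hmax : 0 < max ρ r := lt_max_iff.2 (Or.inl hρ)
  have hωq : 0 ≤ ω q := om_nonneg ω hq0.le hq2
  have hωr : 0 ≤ ω r := om_nonneg ω hr0 hr2
  rcases le_or_gt r q with h | h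
  · have h1 : ω r ≤ ω q := om_mono ω hr0 h hq2
    have h2 : ρ / max ρ r ≤ 1 := (div_le_one hmax).2 (le_max_left _ _)
    calc ρ / max ρ r * ω r ≤ 1 * ω q := mul_le_mul h2 h1 hωr zero_le_one
      _ = ω q := one_mul _
  · have hquot : ω r * q ≤ ω q * r := om_quot ω hq0 h.le hr2
    rw [div_mul_eq_mul_div, div_le_iff₀ hmax]
    have hrmax : r ≤ max ρ r := le_max_right _ _
    nlinarith [mul_le_mul_of_nonneg_left hquot hq0.le,
      mul_le_mul_of_nonneg_left hrmax hωq, mul_nonneg hωq hr0]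

lemma key2 {ρ r s d : ℝ} (hρ : 0 < ρ) (hr0 : 0 ≤ r) (hs0 : 0 ≤ s) (hs2 : s ≤ 2)
    (hd0 : 0 < d) (hd2 : d ≤ 2) (htri : d ≤ r + s) :
    ω s * (ρ * d / (max ρ r * max ρ s)) ≤ 2 * ω d := by
  have hM1 : 0 < max ρ r := lt_max_iff.2 (Or.inl hρ)
  have hM2 : 0 < max ρ s := lt_max_iff.2 (Or.inl hρ)
  have hωs : 0 ≤ ω s := om_nonneg ω hs0 hs2
  have hωd : 0 ≤ ω d := om_nonneg ω hd0.le hd2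
  rw [← mul_div_assoc, div_le_iff₀ (mul_pos hM1 hM2)]
  have h1 : ρ ≤ max ρ r := le_max_left _ _
  have h2 : s ≤ max ρ s := le_max_right _ _
  rcases le_or_gt d s with h | h
  · have hquot : ω s * d ≤ ω d * s := om_quot ω hd0 h hs2
    calc ω s * (ρ * d) = ρ * (ω s * d) := by ring
      _ ≤ ρ * (ω d * s) := mul_le_mul_of_nonneg_left hquot hρ.le
      _ ≤ max ρ r * (ω d * s) := mul_le_mul_of_nonneg_right h1 (mul_nonneg hωd hs0)
      _ ≤ max ρ r * (ω d * max ρ s) :=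
          mul_le_mul_of_nonneg_left (mul_le_mul_of_nonneg_left h2 hωd) hM1.le
      _ ≤ 2 * ω d * (max ρ r * max ρ s) := by
          nlinarith [mul_nonneg (mul_nonneg hωd hM1.le) hM2.le]
  · have hωsd : ω s ≤ ω d := om_mono ω hs0 h.le hd2
    rcases le_or_gt d (2 * s) with h3 | h3
    · have h4 : d ≤ 2 * max ρ s := h3.trans (by linarith)
      calc ω s * (ρ * d) ≤ ω d * (ρ * d) :=
            mul_le_mul_of_nonneg_right hωsd (mul_nonneg hρ.le hd0.le)
        _ ≤ ω d * (max ρ r * d) :=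
            mul_le_mul_of_nonneg_left (mul_le_mul_of_nonneg_right h1 hd0.le) hωd
        _ ≤ ω d * (max ρ r * (2 * max ρ s)) :=
            mul_le_mul_of_nonneg_left (mul_le_mul_of_nonneg_left h4 hM1.le) hωd
        _ = 2 * ω d * (max ρ r * max ρ s) := by ring
    · have h4 : d ≤ 2 * max ρ r := by
        have h5 : d ≤ 2 * r := by linarith
        exact h5.trans (by have := le_max_right ρ r; linarith)
      have h5 : ρ ≤ max ρ s := le_max_left _ _
      calc ω s * (ρ * d) ≤ ω d * (ρ * d) :=
            mul_le_mul_of_nonneg_right hωsd (mul_nonneg hρ.le hd0.le)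
        _ ≤ ω d * (max ρ s * d) :=
            mul_le_mul_of_nonneg_left (mul_le_mul_of_nonneg_right h5 hd0.le) hωd
        _ ≤ ω d * (max ρ s * (2 * max ρ r)) :=
            mul_le_mul_of_nonneg_left (mul_le_mul_of_nonneg_left h4 hM2.le) hωd
        _ = 2 * ω d * (max ρ r * max ρ s) := by ring

lemma key3 {ρ δ r s d : ℝ} (hρ : 0 < ρ) (hρ1 : ρ ≤ 1) (hδ : 0 < δ) (hδ1 : δ ≤ 1)
    (hr : δ < r) (hs0 : 0 ≤ s) (hs2 : s ≤ 2) (hd0 : 0 < d) (hd2 : d ≤ 2)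
    (htri : r ≤ d + s) :
    ω s * (ρ * d / (max ρ r * max ρ s)) ≤
      (ρ / δ + 2 * ω (Real.sqrt ρ) / (δ * ω (δ / 2))) * ω d := by
  have hM1 : 0 < max ρ r := lt_max_iff.2 (Or.inl hρ)
  have hM2 : 0 < max ρ s := lt_max_iff.2 (Or.inl hρ)
  have hωs : 0 ≤ ω s := om_nonneg ω hs0 hs2
  have hωd : 0 ≤ ω d := om_nonneg ω hd0.le hd2
  have hP : 0 < ω (δ / 2) := om_pos ω (by linarith) (by linarith)
  have hQ0 : 0 ≤ ω (Real.sqrt ρ) := by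
    apply om_nonneg ω (Real.sqrt_nonneg _)
    rw [show (2:ℝ) = Real.sqrt 4 by rw [show (4:ℝ) = 2^2 by norm_num, Real.sqrt_sq]; norm_num]
    exact Real.sqrt_le_sqrt (by linarith)
  have hδM1 : δ ≤ max ρ r := le_trans hr.le (le_max_right _ _)
  rcases le_or_gt d s with h | h
  · -- bounded by (ρ/δ) * ω d
    have main : ω s * (ρ * d / (max ρ r * max ρ s)) ≤ ρ / δ * ω d := by
      rw [← mul_div_assoc, div_mul_eq_mul_div, div_le_div_iff₀ (mul_pos hM1 hM2) hδ]
      have hquot : ω s * d ≤ ω d * s := om_quot ω hd0 h hs2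
      have h2 : s ≤ max ρ s := le_max_right _ _
      nlinarith [mul_le_mul_of_nonneg_left hquot (mul_nonneg hρ.le hδ.le),
        mul_le_mul_of_nonneg_left h2 (mul_nonneg (mul_nonneg hωd hρ.le) hδ.le),
        mul_le_mul_of_nonneg_right hδM1 (mul_nonneg (mul_nonneg hωd hρ.le) hM2.le)]
    have h2 : 0 ≤ 2 * ω (Real.sqrt ρ) / (δ * ω (δ / 2)) * ω d :=
      mul_nonneg (div_nonneg (by linarith) (mul_pos hδ hP).le) hωd
    nlinarith [main]
  · -- s < d : bounded by second term
    have hdδ : δ / 2 < d := by linarith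
    have hPd : ω (δ / 2) ≤ ω d := om_mono ω (by linarith) hdδ.le hd2
    have hk1 : ρ / max ρ s * ω s ≤ ω (Real.sqrt ρ) := key1 ω hρ hρ1 hs0 hs2
    have hk1' : ρ * ω s ≤ ω (Real.sqrt ρ) * max ρ s := by
      rw [div_mul_eq_mul_div, div_le_iff₀ hM2] at hk1; linarith
    have main : ω s * (ρ * d / (max ρ r * max ρ s)) ≤
        2 * ω (Real.sqrt ρ) / (δ * ω (δ / 2)) * ω d := by
      rw [← mul_div_assoc, div_mul_eq_mul_div, div_le_div_iff₀ (mul_pos hM1 hM2) (mul_pos hδ hP)]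
      -- ω s * (ρ * d) * (δ * ω(δ/2)) ≤ 2 * Q * ω d * (max ρ r * max ρ s)
      nlinarith [mul_le_mul_of_nonneg_right hk1' (mul_nonneg (mul_nonneg hd0.le hδ.le) hP.le),
        mul_le_mul_of_nonneg_left hδM1 (mul_nonneg (mul_nonneg hQ0 hM2.le) hP.le),
        mul_le_mul_of_nonneg_left hPd (mul_nonneg (mul_nonneg hQ0 hM2.le) hM1.le),
        mul_le_mul_of_nonneg_left hd2 (mul_nonneg (mul_nonneg (mul_nonneg hQ0 hM2.le) hM1.le) hωd)]
    have h2 : 0 ≤ ρ / δ * ω d := mul_nonneg (div_nonneg hρ.le hδ.le) hωd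
    nlinarith [main]

lemma num_abs {z w : ℂ} (hw : Complex.abs w = 1) :
    Complex.abs (z * (starRingEnd ℂ) w - 1) = Complex.abs (z - w) := by
  have h1 : (starRingEnd ℂ) w * w = 1 := by
    rw [mul_comm, Complex.mul_conj, Complex.normSq_eq_abs, hw]; norm_num
  have h2 : z * (starRingEnd ℂ) w - 1 = (starRingEnd ℂ) w * (z - w) := by
    rw [mul_sub, ← h1]; ring
  rw [h2, map_mul, Complex.abs_conj, hw, one_mul]

lemma re_nonpos {z w : ℂ} (hz : Complex.abs z ≤ 1) (hw : Complex.abs w = 1) :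
    (z * (starRingEnd ℂ) w - 1).re ≤ 0 := by
  have h : (z * (starRingEnd ℂ) w).re ≤ 1 := by
    calc (z * (starRingEnd ℂ) w).re ≤ Complex.abs (z * (starRingEnd ℂ) w) :=
          Complex.re_le_norm _
      _ = Complex.abs z * Complex.abs w := map_mul _ _ _ |>.trans (by rw [Complex.abs_conj])
      _ ≤ 1 := by rw [hw, mul_one]; exact hz
  simp only [Complex.sub_re, Complex.one_re]
  linarith

lemma denom_lb {z w : ℂ} (hz : Complex.abs z ≤ 1) (hw : Complex.abs w = 1) {ρ : ℝ}
    (hρ : 0 < ρ) :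
    max ρ (Complex.abs (z - w)) ≤ Complex.abs (z * (starRingEnd ℂ) w - 1 - (ρ:ℂ)) := by
  set u := z * (starRingEnd ℂ) w - 1 with hu
  have hre : u.re ≤ 0 := re_nonpos hz hw
  have hb1 : ρ ≤ Complex.abs (u - ρ) := by
    have h1 : |(u - (ρ:ℂ)).re| ≤ Complex.abs (u - ρ) := Complex.abs_re_le_norm _
    rw [Complex.sub_re, Complex.ofReal_re] at h1
    calc ρ ≤ |u.re - ρ| := by rw [abs_sub_comm]; exact le_trans (by linarith) (le_abs_self _)
      _ ≤ _ := h1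
  have hb2 : Complex.abs u ≤ Complex.abs (u - ρ) := by
    rw [Complex.abs_apply, Complex.abs_apply]
    apply Real.sqrt_le_sqrt
    rw [Complex.normSq_apply, Complex.normSq_apply]
    simp only [Complex.sub_re, Complex.sub_im, Complex.ofReal_re, Complex.ofReal_im,
      Complex.one_re, Complex.one_im] at hre ⊢
    nlinarith
  exact max_le hb1 (by rw [← num_abs hw]; exact hb2)

lemma denom_ne {z w : ℂ} (hz : Complex.abs z ≤ 1) (hw : Complex.abs w = 1) {ρ : ℝ}
    (hρ : 0 < ρ) : z * (starRingEnd ℂ) w - 1 - (ρ:ℂ) ≠ 0 := by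
  intro h
  have := denom_lb hz hw hρ (z := z)
  rw [h] at this
  simp only [map_zero] at this
  have : ρ ≤ 0 := le_trans (le_max_left _ _) this
  linarith

lemma factor_abs_le_one {z w : ℂ} (hz : Complex.abs z ≤ 1) (hw : Complex.abs w = 1) {ρ : ℝ}
    (hρ : 0 < ρ) :
    Complex.abs ((z * (starRingEnd ℂ) w - 1) / (z * (starRingEnd ℂ) w - 1 - (ρ:ℂ))) ≤ 1 := by
  rw [map_div₀]
  apply div_le_one_of_le₀
  · rw [num_abs hw]
    exact le_trans (le_max_right ρ _) (denom_lb hz hw hρ)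
  · exact (Complex.abs.nonneg _)

lemma factor_sub_one {z w : ℂ} (hz : Complex.abs z ≤ 1) (hw : Complex.abs w = 1) {ρ : ℝ}
    (hρ : 0 < ρ) :
    Complex.abs ((z * (starRingEnd ℂ) w - 1) / (z * (starRingEnd ℂ) w - 1 - (ρ:ℂ)) - 1)
      ≤ ρ / max ρ (Complex.abs (z - w)) := by
  have hne := denom_ne hz hw hρ (z := z)
  have heq : (z * (starRingEnd ℂ) w - 1) / (z * (starRingEnd ℂ) w - 1 - (ρ:ℂ)) - 1
      = (ρ:ℂ) / (z * (starRingEnd ℂ) w - 1 - (ρ:ℂ)) := by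
    field_simp
    ring
  rw [heq, map_div₀, Complex.abs_ofReal, abs_of_pos hρ]
  exact div_le_div_of_nonneg_left hρ.le (lt_max_iff.2 (Or.inl hρ)) (denom_lb hz hw hρ)

lemma factor_sub_factor {ξ ζ w : ℂ} (hξ : Complex.abs ξ ≤ 1) (hζ : Complex.abs ζ ≤ 1)
    (hw : Complex.abs w = 1) {ρ : ℝ} (hρ : 0 < ρ) :
    Complex.abs ((ξ * (starRingEnd ℂ) w - 1) / (ξ * (starRingEnd ℂ) w - 1 - (ρ:ℂ))
      - (ζ * (starRingEnd ℂ) w - 1) / (ζ * (starRingEnd ℂ) w - 1 - (ρ:ℂ)))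
      ≤ ρ * Complex.abs (ξ - ζ) /
        (max ρ (Complex.abs (ξ - w)) * max ρ (Complex.abs (ζ - w))) := by
  have hne1 := denom_ne hξ hw hρ (z := ξ)
  have hne2 := denom_ne hζ hw hρ (z := ζ)
  have heq : (ξ * (starRingEnd ℂ) w - 1) / (ξ * (starRingEnd ℂ) w - 1 - (ρ:ℂ))
      - (ζ * (starRingEnd ℂ) w - 1) / (ζ * (starRingEnd ℂ) w - 1 - (ρ:ℂ))
      = (ρ:ℂ) * ((ζ - ξ) * (starRingEnd ℂ) w) /
        ((ξ * (starRingEnd ℂ) w - 1 - (ρ:ℂ)) * (ζ * (starRingEnd ℂ) w - 1 - (ρ:ℂ))) := by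
    rw [div_sub_div _ _ hne1 hne2]
    congr 1
    ring
  rw [heq, map_div₀, map_mul, map_mul, map_mul, Complex.abs_ofReal, abs_of_pos hρ,
    Complex.abs_conj, hw, mul_one]
  have habs : Complex.abs (ζ - ξ) = Complex.abs (ξ - ζ) := Complex.abs.map_sub ζ ξ
  rw [habs]
  apply div_le_div_of_nonneg_left (mul_nonneg hρ.le (Complex.abs.nonneg _))
  · exact mul_pos (lt_max_iff.2 (Or.inl hρ)) (lt_max_iff.2 (Or.inl hρ))
  · exact mul_le_mul (denom_lb hξ hw hρ) (denom_lb hζ hw hρ)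
      (le_max_of_le_left hρ.le) (Complex.abs.nonneg _)

lemma abs_prod_sub_prod {ι : Type*} [DecidableEq ι] (s : Finset ι) (c d : ι → ℂ)
    (hc : ∀ i ∈ s, Complex.abs (c i) ≤ 1) (hd : ∀ i ∈ s, Complex.abs (d i) ≤ 1) :
    Complex.abs (∏ i ∈ s, c i - ∏ i ∈ s, d i) ≤ ∑ i ∈ s, Complex.abs (c i - d i) := by
  induction s using Finset.induction_on with
  | empty => simp
  | @insert a s ha ih =>
    rw [Finset.prod_insert ha, Finset.prod_insert ha, Finset.sum_insert ha]
    have key : c a * ∏ i ∈ s, c i - d a * ∏ i ∈ s, d i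
        = c a * (∏ i ∈ s, c i - ∏ i ∈ s, d i) + (c a - d a) * ∏ i ∈ s, d i := by ring
    have hprod : Complex.abs (∏ i ∈ s, d i) ≤ 1 := by
      rw [map_prod]
      exact Finset.prod_le_one (fun i _ => Complex.abs.nonneg _)
        (fun i hi => hd i (Finset.mem_insert_of_mem hi))
    calc Complex.abs (c a * ∏ i ∈ s, c i - d a * ∏ i ∈ s, d i)
        = Complex.abs (c a * (∏ i ∈ s, c i - ∏ i ∈ s, d i) + (c a - d a) * ∏ i ∈ s, d i) := by
          rw [key]
      _ ≤ Complex.abs (c a * (∏ i ∈ s, c i - ∏ i ∈ s, d i))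
          + Complex.abs ((c a - d a) * ∏ i ∈ s, d i) := Complex.abs.add_le _ _
      _ = Complex.abs (c a) * Complex.abs (∏ i ∈ s, c i - ∏ i ∈ s, d i)
          + Complex.abs (c a - d a) * Complex.abs (∏ i ∈ s, d i) := by
          rw [map_mul, map_mul]
      _ ≤ 1 * (∑ i ∈ s, Complex.abs (c i - d i)) + Complex.abs (c a - d a) * 1 := by
          apply add_le_add
          · exact mul_le_mul (hc a (Finset.mem_insert_self _ _))
              (ih (fun i hi => hc i (Finset.mem_insert_of_mem hi))
                  (fun i hi => hd i (Finset.mem_insert_of_mem hi)))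
              (Complex.abs.nonneg _) zero_le_one
          · exact mul_le_mul_of_nonneg_left hprod (Complex.abs.nonneg _)
      _ = Complex.abs (c a - d a) + ∑ i ∈ s, Complex.abs (c i - d i) := by ring

def phiP {K : ℕ} (a : Fin (K + 1) → ℂ) (ρ : ℝ) (z : ℂ) : ℂ :=
  ∏ k, (z * (starRingEnd ℂ) (a k) - 1) / (z * (starRingEnd ℂ) (a k) - 1 - (ρ:ℂ))

lemma mem_sphere_of_abs {x : ℂ} (h : Complex.abs x = 1) : x ∈ sphere (0:ℂ) 1 := by
  rw [mem_sphere_iff_norm, sub_zero, Complex.norm_eq_abs]; exact h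

lemma abs_of_mem_sphere {x : ℂ} (h : x ∈ sphere (0:ℂ) 1) : Complex.abs x = 1 := by
  rw [mem_sphere_iff_norm, sub_zero, Complex.norm_eq_abs] at h; exact h

lemma abs_sub_le_two {x y : ℂ} (hx : Complex.abs x = 1) (hy : Complex.abs y = 1) :
    Complex.abs (x - y) ≤ 2 := by
  have h := Complex.abs.sub_le x 0 y
  simp only [sub_zero, zero_sub, Complex.abs.map_neg] at h
  rw [hx, hy] at h; linarith

lemma phiP_abs_le_one {K : ℕ} {a : Fin (K + 1) → ℂ} (haS : ∀ k, Complex.abs (a k) = 1)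
    {ρ : ℝ} (hρ : 0 < ρ) {z : ℂ} (hz : Complex.abs z ≤ 1) :
    Complex.abs (phiP a ρ z) ≤ 1 := by
  rw [phiP, map_prod]
  exact Finset.prod_le_one (fun k _ => Complex.abs.nonneg _)
    (fun k _ => factor_abs_le_one hz (haS k) hρ)

lemma pair_near
    (ω : ModulusOfContinuity) {E : Set ℂ}
    {K : ℕ} {a : Fin (K + 1) → ℂ} (haE : ∀ k, a k ∈ E) (haS : ∀ k, Complex.abs (a k) = 1)
    {g : ℂ → ℂ} {ε1 δ ρ : ℝ}
    (hε1 : 0 ≤ ε1) (hδ : 0 < δ) (hρ : 0 < ρ)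
    (hJ : ∀ ξ ∈ ENbhd E δ, ∀ ζ ∈ ENbhd E δ,
      Complex.abs (g ξ - g ζ) ≤ ε1 * ω (Complex.abs (ξ - ζ)))
    (hgz : ∀ k, g (a k) = 0)
    {ξ ζ : ℂ} (hξ : Complex.abs ξ = 1) (hζ : Complex.abs ζ = 1) (hne : ξ ≠ ζ)
    (hξE : Metric.infDist ξ E ≤ δ) (hζE : Metric.infDist ζ E ≤ δ) :
    Complex.abs ((phiP a ρ ξ - 1) * g ξ - (phiP a ρ ζ - 1) * g ζ)
      ≤ (4 * ((K:ℝ) + 1) * ε1) * ω (Complex.abs (ξ - ζ)) := by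
  set d := Complex.abs (ξ - ζ) with hd
  have hd0 : 0 < d := Complex.abs.pos (sub_ne_zero.2 hne)
  have hd2 : d ≤ 2 := abs_sub_le_two hξ hζ
  have hωd : 0 ≤ ω d := om_nonneg ω hd0.le hd2
  have hξN : ξ ∈ ENbhd E δ := ⟨mem_sphere_of_abs hξ, hξE⟩
  have hζN : ζ ∈ ENbhd E δ := ⟨mem_sphere_of_abs hζ, hζE⟩
  have haN : ∀ k, a k ∈ ENbhd E δ := fun k => by
    refine ⟨mem_sphere_of_abs (haS k), ?_⟩
    have h := Metric.infDist_le_dist_of_mem (x := a k) (haE k)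
    simp only [dist_self] at h
    linarith
  have hΦ1 : Complex.abs (phiP a ρ ξ - 1) ≤ 2 := by
    have h := Complex.abs.sub_le (phiP a ρ ξ) 0 1
    simp only [sub_zero, zero_sub, Complex.abs.map_neg, map_one] at h
    have := phiP_abs_le_one haS hρ hξ.le
    linarith
  have hdecomp : (phiP a ρ ξ - 1) * g ξ - (phiP a ρ ζ - 1) * g ζ
      = (phiP a ρ ξ - 1) * (g ξ - g ζ) + g ζ * (phiP a ρ ξ - phiP a ρ ζ) := by ring
  have t1 : Complex.abs ((phiP a ρ ξ - 1) * (g ξ - g ζ)) ≤ 2 * (ε1 * ω d) := by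
    rw [map_mul]
    exact mul_le_mul hΦ1 (hJ ξ hξN ζ hζN) (Complex.abs.nonneg _) (by norm_num)
  have t2sum : Complex.abs (phiP a ρ ξ - phiP a ρ ζ)
      ≤ ∑ k, Complex.abs ((ξ * (starRingEnd ℂ) (a k) - 1) / (ξ * (starRingEnd ℂ) (a k) - 1 - (ρ:ℂ))
          - (ζ * (starRingEnd ℂ) (a k) - 1) / (ζ * (starRingEnd ℂ) (a k) - 1 - (ρ:ℂ))) := by
    apply abs_prod_sub_prod
    · exact fun k _ => factor_abs_le_one hξ.le (haS k) hρ
    · exact fun k _ => factor_abs_le_one hζ.le (haS k) hρ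
  have pk : ∀ k : Fin (K + 1),
      Complex.abs (g ζ) *
        Complex.abs ((ξ * (starRingEnd ℂ) (a k) - 1) / (ξ * (starRingEnd ℂ) (a k) - 1 - (ρ:ℂ))
          - (ζ * (starRingEnd ℂ) (a k) - 1) / (ζ * (starRingEnd ℂ) (a k) - 1 - (ρ:ℂ)))
      ≤ 2 * (ε1 * ω d) := by
    intro k
    set rk := Complex.abs (ξ - a k) with hrk
    set sk := Complex.abs (ζ - a k) with hsk
    have hsk2 : sk ≤ 2 := abs_sub_le_two hζ (haS k)
    have h1 : Complex.abs (g ζ) ≤ ε1 * ω sk := by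
      have h := hJ ζ hζN (a k) (haN k)
      rwa [hgz k, sub_zero] at h
    have h2 := factor_sub_factor hξ.le hζ.le (haS k) hρ (ζ := ζ)
    have htri : d ≤ rk + sk := by
      have h := Complex.abs.sub_le ξ (a k) ζ
      rw [Complex.abs.map_sub (a k) ζ] at h
      exact h
    have h3 : ω sk * (ρ * d / (max ρ rk * max ρ sk)) ≤ 2 * ω d :=
      key2 ω hρ (Complex.abs.nonneg _) (Complex.abs.nonneg _) hsk2 hd0 hd2 htri
    calc Complex.abs (g ζ) * _ ≤ (ε1 * ω sk) * (ρ * d / (max ρ rk * max ρ sk)) :=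
          mul_le_mul h1 h2 (Complex.abs.nonneg _)
            (mul_nonneg hε1 (om_nonneg ω (Complex.abs.nonneg _) hsk2))
      _ = ε1 * (ω sk * (ρ * d / (max ρ rk * max ρ sk))) := by ring
      _ ≤ ε1 * (2 * ω d) := mul_le_mul_of_nonneg_left h3 hε1
      _ = 2 * (ε1 * ω d) := by ring
  calc Complex.abs ((phiP a ρ ξ - 1) * g ξ - (phiP a ρ ζ - 1) * g ζ)
      = Complex.abs ((phiP a ρ ξ - 1) * (g ξ - g ζ) + g ζ * (phiP a ρ ξ - phiP a ρ ζ)) := by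
        rw [hdecomp]
    _ ≤ Complex.abs ((phiP a ρ ξ - 1) * (g ξ - g ζ))
        + Complex.abs (g ζ * (phiP a ρ ξ - phiP a ρ ζ)) := Complex.abs.add_le _ _
    _ ≤ 2 * (ε1 * ω d) + Complex.abs (g ζ) * (∑ k, Complex.abs
          ((ξ * (starRingEnd ℂ) (a k) - 1) / (ξ * (starRingEnd ℂ) (a k) - 1 - (ρ:ℂ))
          - (ζ * (starRingEnd ℂ) (a k) - 1) / (ζ * (starRingEnd ℂ) (a k) - 1 - (ρ:ℂ)))) := by
        refine add_le_add t1 ?_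
        rw [map_mul]
        exact mul_le_mul_of_nonneg_left t2sum (Complex.abs.nonneg _)
    _ = 2 * (ε1 * ω d) + ∑ k, Complex.abs (g ζ) * Complex.abs
          ((ξ * (starRingEnd ℂ) (a k) - 1) / (ξ * (starRingEnd ℂ) (a k) - 1 - (ρ:ℂ))
          - (ζ * (starRingEnd ℂ) (a k) - 1) / (ζ * (starRingEnd ℂ) (a k) - 1 - (ρ:ℂ))) := by
        rw [Finset.mul_sum]
    _ ≤ 2 * (ε1 * ω d) + ∑ _k : Fin (K + 1), 2 * (ε1 * ω d) :=
        add_le_add le_rfl (Finset.sum_le_sum (fun k _ => pk k))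
    _ = 2 * (ε1 * ω d) + ((K:ℝ) + 1) * (2 * (ε1 * ω d)) := by
        rw [Finset.sum_const, Finset.card_univ, Fintype.card_fin, nsmul_eq_mul]
        push_cast; ring
    _ ≤ (4 * ((K:ℝ) + 1) * ε1) * ω d := by
        have hK : (0:ℝ) ≤ (K:ℝ) := Nat.cast_nonneg K
        nlinarith [mul_nonneg hε1 hωd]

lemma pair_far
    (ω : ModulusOfContinuity) {E : Set ℂ}
    {K : ℕ} {a : Fin (K + 1) → ℂ} (haE : ∀ k, a k ∈ E) (haS : ∀ k, Complex.abs (a k) = 1)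
    {g : ℂ → ℂ} {C δ ρ : ℝ}
    (hC0 : 0 ≤ C) (hδ : 0 < δ) (hδ1 : δ ≤ 1) (hρ : 0 < ρ) (hρ1 : ρ ≤ 1)
    (hC : ∀ ξ ∈ sphere (0:ℂ) 1, ∀ ζ ∈ sphere (0:ℂ) 1,
      Complex.abs (g ξ - g ζ) ≤ C * ω (Complex.abs (ξ - ζ)))
    (hgb : ∀ ζ ∈ sphere (0:ℂ) 1, ∀ k, Complex.abs (g ζ) ≤ C * ω (Complex.abs (ζ - a k)))
    {ξ ζ : ℂ} (hξ : Complex.abs ξ = 1) (hζ : Complex.abs ζ = 1) (hne : ξ ≠ ζ)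
    (hfar : δ < Metric.infDist ξ E) :
    Complex.abs ((phiP a ρ ξ - 1) * g ξ - (phiP a ρ ζ - 1) * g ζ)
      ≤ (((K:ℝ) + 1) * (2 * C * (ρ / δ)
          + 2 * C * ω (Real.sqrt ρ) / (δ * ω (δ / 2)))) * ω (Complex.abs (ξ - ζ)) := by
  set d := Complex.abs (ξ - ζ) with hd
  have hd0 : 0 < d := Complex.abs.pos (sub_ne_zero.2 hne)
  have hd2 : d ≤ 2 := abs_sub_le_two hξ hζ
  have hωd : 0 ≤ ω d := om_nonneg ω hd0.le hd2
  have hrk : ∀ k, δ < Complex.abs (ξ - a k) := by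
    intro k
    calc δ < Metric.infDist ξ E := hfar
      _ ≤ dist ξ (a k) := Metric.infDist_le_dist_of_mem (haE k)
      _ = Complex.abs (ξ - a k) := Complex.dist_eq ξ (a k)
  have t1 : Complex.abs (phiP a ρ ξ - 1) ≤ ((K:ℝ) + 1) * (ρ / δ) := by
    have h1 : phiP a ρ ξ - 1 = (∏ k, (ξ * (starRingEnd ℂ) (a k) - 1) /
        (ξ * (starRingEnd ℂ) (a k) - 1 - (ρ:ℂ))) - ∏ _k : Fin (K + 1), (1:ℂ) := by
      rw [Finset.prod_const_one]; rfl
    rw [h1]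
    calc Complex.abs _ ≤ ∑ k, Complex.abs ((ξ * (starRingEnd ℂ) (a k) - 1) /
          (ξ * (starRingEnd ℂ) (a k) - 1 - (ρ:ℂ)) - 1) :=
        abs_prod_sub_prod _ _ _ (fun k _ => factor_abs_le_one hξ.le (haS k) hρ)
          (fun k _ => by simp)
      _ ≤ ∑ _k : Fin (K + 1), ρ / δ := by
          apply Finset.sum_le_sum
          intro k _
          refine le_trans (factor_sub_one hξ.le (haS k) hρ) ?_
          exact div_le_div_of_nonneg_left hρ.le hδ ((hrk k).le.trans (le_max_right _ _))
      _ = ((K:ℝ) + 1) * (ρ / δ) := by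
          rw [Finset.sum_const, Finset.card_univ, Fintype.card_fin, nsmul_eq_mul]
          push_cast; ring
  have hdecomp : (phiP a ρ ξ - 1) * g ξ - (phiP a ρ ζ - 1) * g ζ
      = (phiP a ρ ξ - 1) * (g ξ - g ζ) + g ζ * (phiP a ρ ξ - phiP a ρ ζ) := by ring
  have hterm1 : Complex.abs ((phiP a ρ ξ - 1) * (g ξ - g ζ))
      ≤ (((K:ℝ) + 1) * (ρ / δ)) * (C * ω d) := by
    rw [map_mul]
    exact mul_le_mul t1 (hC ξ (mem_sphere_of_abs hξ) ζ (mem_sphere_of_abs hζ))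
      (Complex.abs.nonneg _) (by positivity)
  have t2sum : Complex.abs (phiP a ρ ξ - phiP a ρ ζ)
      ≤ ∑ k, Complex.abs ((ξ * (starRingEnd ℂ) (a k) - 1) / (ξ * (starRingEnd ℂ) (a k) - 1 - (ρ:ℂ))
          - (ζ * (starRingEnd ℂ) (a k) - 1) / (ζ * (starRingEnd ℂ) (a k) - 1 - (ρ:ℂ))) := by
    apply abs_prod_sub_prod
    · exact fun k _ => factor_abs_le_one hξ.le (haS k) hρ
    · exact fun k _ => factor_abs_le_one hζ.le (haS k) hρ
  have pk : ∀ k : Fin (K + 1),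
      Complex.abs (g ζ) *
        Complex.abs ((ξ * (starRingEnd ℂ) (a k) - 1) / (ξ * (starRingEnd ℂ) (a k) - 1 - (ρ:ℂ))
          - (ζ * (starRingEnd ℂ) (a k) - 1) / (ζ * (starRingEnd ℂ) (a k) - 1 - (ρ:ℂ)))
      ≤ C * ((ρ / δ + 2 * ω (Real.sqrt ρ) / (δ * ω (δ / 2))) * ω d) := by
    intro k
    set rk := Complex.abs (ξ - a k) with hrkdef
    set sk := Complex.abs (ζ - a k) with hskdef
    have hsk2 : sk ≤ 2 := abs_sub_le_two hζ (haS k)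
    have h1 : Complex.abs (g ζ) ≤ C * ω sk := hgb ζ (mem_sphere_of_abs hζ) k
    have h2 := factor_sub_factor hξ.le hζ.le (haS k) hρ (ζ := ζ)
    have htri : rk ≤ d + sk := by
      have h := Complex.abs.sub_le ξ ζ (a k)
      exact h
    have h3 : ω sk * (ρ * d / (max ρ rk * max ρ sk))
        ≤ (ρ / δ + 2 * ω (Real.sqrt ρ) / (δ * ω (δ / 2))) * ω d :=
      key3 ω hρ hρ1 hδ hδ1 (hrk k) (Complex.abs.nonneg _) hsk2 hd0 hd2 htri
    calc Complex.abs (g ζ) * _ ≤ (C * ω sk) * (ρ * d / (max ρ rk * max ρ sk)) :=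
          mul_le_mul h1 h2 (Complex.abs.nonneg _)
            (mul_nonneg hC0 (om_nonneg ω (Complex.abs.nonneg _) hsk2))
      _ = C * (ω sk * (ρ * d / (max ρ rk * max ρ sk))) := by ring
      _ ≤ C * ((ρ / δ + 2 * ω (Real.sqrt ρ) / (δ * ω (δ / 2))) * ω d) :=
          mul_le_mul_of_nonneg_left h3 hC0
  calc Complex.abs ((phiP a ρ ξ - 1) * g ξ - (phiP a ρ ζ - 1) * g ζ)
      = Complex.abs ((phiP a ρ ξ - 1) * (g ξ - g ζ) + g ζ * (phiP a ρ ξ - phiP a ρ ζ)) := by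
        rw [hdecomp]
    _ ≤ Complex.abs ((phiP a ρ ξ - 1) * (g ξ - g ζ))
        + Complex.abs (g ζ * (phiP a ρ ξ - phiP a ρ ζ)) := Complex.abs.add_le _ _
    _ ≤ (((K:ℝ) + 1) * (ρ / δ)) * (C * ω d) + ∑ k, Complex.abs (g ζ) * Complex.abs
          ((ξ * (starRingEnd ℂ) (a k) - 1) / (ξ * (starRingEnd ℂ) (a k) - 1 - (ρ:ℂ))
          - (ζ * (starRingEnd ℂ) (a k) - 1) / (ζ * (starRingEnd ℂ) (a k) - 1 - (ρ:ℂ))) := by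
        refine add_le_add hterm1 ?_
        rw [map_mul, ← Finset.mul_sum]
        exact mul_le_mul_of_nonneg_left t2sum (Complex.abs.nonneg _)
    _ ≤ (((K:ℝ) + 1) * (ρ / δ)) * (C * ω d)
        + ∑ _k : Fin (K + 1), C * ((ρ / δ + 2 * ω (Real.sqrt ρ) / (δ * ω (δ / 2))) * ω d) :=
        add_le_add le_rfl (Finset.sum_le_sum (fun k _ => pk k))
    _ = (((K:ℝ) + 1) * (ρ / δ)) * (C * ω d)
        + ((K:ℝ) + 1) * (C * ((ρ / δ + 2 * ω (Real.sqrt ρ) / (δ * ω (δ / 2))) * ω d)) := by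
        rw [Finset.sum_const, Finset.card_univ, Fintype.card_fin, nsmul_eq_mul]
        push_cast; ring
    _ = (((K:ℝ) + 1) * (2 * C * (ρ / δ)
          + 2 * C * ω (Real.sqrt ρ) / (δ * ω (δ / 2)))) * ω d := by ring

lemma pair_main
    (ω : ModulusOfContinuity) {E : Set ℂ}
    {K : ℕ} {a : Fin (K + 1) → ℂ} (haE : ∀ k, a k ∈ E) (haS : ∀ k, Complex.abs (a k) = 1)
    {g : ℂ → ℂ} {C ε1 δ ρ : ℝ}
    (hC0 : 0 ≤ C) (hε1 : 0 ≤ ε1) (hδ : 0 < δ) (hδ1 : δ ≤ 1) (hρ : 0 < ρ) (hρ1 : ρ ≤ 1)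
    (hC : ∀ ξ ∈ sphere (0:ℂ) 1, ∀ ζ ∈ sphere (0:ℂ) 1,
      Complex.abs (g ξ - g ζ) ≤ C * ω (Complex.abs (ξ - ζ)))
    (hgb : ∀ ζ ∈ sphere (0:ℂ) 1, ∀ k, Complex.abs (g ζ) ≤ C * ω (Complex.abs (ζ - a k)))
    (hJ : ∀ ξ ∈ ENbhd E δ, ∀ ζ ∈ ENbhd E δ,
      Complex.abs (g ξ - g ζ) ≤ ε1 * ω (Complex.abs (ξ - ζ)))
    (hgz : ∀ k, g (a k) = 0)
    {ξ ζ : ℂ} (hξ : Complex.abs ξ = 1) (hζ : Complex.abs ζ = 1) (hne : ξ ≠ ζ) :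
    Complex.abs ((phiP a ρ ξ - 1) * g ξ - (phiP a ρ ζ - 1) * g ζ)
      ≤ (4 * ((K:ℝ) + 1) * ε1 + ((K:ℝ) + 1) * (2 * C * (ρ / δ)
          + 2 * C * ω (Real.sqrt ρ) / (δ * ω (δ / 2)))) * ω (Complex.abs (ξ - ζ)) := by
  set d := Complex.abs (ξ - ζ) with hd
  have hd0 : 0 < d := Complex.abs.pos (sub_ne_zero.2 hne)
  have hd2 : d ≤ 2 := abs_sub_le_two hξ hζ
  have hωd : 0 ≤ ω d := om_nonneg ω hd0.le hd2
  have hP : 0 < ω (δ / 2) := om_pos ω (by linarith) (by linarith)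
  have hQ0 : 0 ≤ ω (Real.sqrt ρ) := by
    apply om_nonneg ω (Real.sqrt_nonneg _)
    calc Real.sqrt ρ ≤ Real.sqrt 1 := Real.sqrt_le_sqrt hρ1
      _ ≤ 2 := by rw [Real.sqrt_one]; norm_num
  have hT1 : 0 ≤ 4 * ((K:ℝ) + 1) * ε1 := by positivity
  have hT2 : 0 ≤ ((K:ℝ) + 1) * (2 * C * (ρ / δ)
      + 2 * C * ω (Real.sqrt ρ) / (δ * ω (δ / 2))) := by
    apply mul_nonneg (by positivity)
    apply add_nonneg
    · positivity
    · exact div_nonneg (by positivity) (by positivity)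
  by_cases h1 : Metric.infDist ξ E ≤ δ
  · by_cases h2 : Metric.infDist ζ E ≤ δ
    · refine le_trans (pair_near ω haE haS hε1 hδ hρ hJ hgz hξ hζ hne h1 h2) ?_
      nlinarith [mul_nonneg hT2 hωd]
    · push_neg at h2
      have h := pair_far ω haE haS hC0 hδ hδ1 hρ hρ1 hC hgb hζ hξ (Ne.symm hne) h2
      rw [Complex.abs.map_sub] at h
      rw [show Complex.abs (ζ - ξ) = d by rw [hd]; exact Complex.abs.map_sub ζ ξ] at h
      refine le_trans h ?_
      nlinarith [mul_nonneg hT1 hωd]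
  · push_neg at h1
    have h := pair_far ω haE haS hC0 hδ hδ1 hρ hρ1 hC hgb hξ hζ hne h1
    refine le_trans h ?_
    nlinarith [mul_nonneg hT1 hωd]

lemma phiP_sub_one_le (ω : ModulusOfContinuity) {K : ℕ} {a : Fin (K + 1) → ℂ}
    (haS : ∀ k, Complex.abs (a k) = 1) {ρ : ℝ} (hρ : 0 < ρ) {z : ℂ}
    (hz : Complex.abs z ≤ 1) :
    Complex.abs (phiP a ρ z - 1) ≤ ∑ k, Complex.abs
      ((z * (starRingEnd ℂ) (a k) - 1) / (z * (starRingEnd ℂ) (a k) - 1 - (ρ:ℂ)) - 1) := by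
  have h1 : phiP a ρ z - 1 = (∏ k, (z * (starRingEnd ℂ) (a k) - 1) /
      (z * (starRingEnd ℂ) (a k) - 1 - (ρ:ℂ))) - ∏ _k : Fin (K + 1), (1:ℂ) := by
    rw [Finset.prod_const_one]; rfl
  rw [h1]
  exact abs_prod_sub_prod _ _ _ (fun k _ => factor_abs_le_one hz (haS k) hρ) (fun k _ => by simp)

lemma bdry_bound (ω : ModulusOfContinuity) {K : ℕ} {a : Fin (K + 1) → ℂ}
    (haS : ∀ k, Complex.abs (a k) = 1) {g : ℂ → ℂ} {C ρ : ℝ}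
    (hC0 : 0 ≤ C) (hρ : 0 < ρ) (hρ1 : ρ ≤ 1)
    (hgb : ∀ ζ ∈ sphere (0:ℂ) 1, ∀ k, Complex.abs (g ζ) ≤ C * ω (Complex.abs (ζ - a k)))
    {z : ℂ} (hz : Complex.abs z = 1) :
    Complex.abs ((phiP a ρ z - 1) * g z) ≤ ((K:ℝ) + 1) * (C * ω (Real.sqrt ρ)) := by
  rw [map_mul]
  have t1 := phiP_sub_one_le ω haS hρ hz.le
  have pk : ∀ k : Fin (K + 1), Complex.abs
      ((z * (starRingEnd ℂ) (a k) - 1) / (z * (starRingEnd ℂ) (a k) - 1 - (ρ:ℂ)) - 1)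
        * Complex.abs (g z) ≤ C * ω (Real.sqrt ρ) := by
    intro k
    calc Complex.abs ((z * (starRingEnd ℂ) (a k) - 1) /
            (z * (starRingEnd ℂ) (a k) - 1 - (ρ:ℂ)) - 1) * Complex.abs (g z)
        ≤ (ρ / max ρ (Complex.abs (z - a k))) * (C * ω (Complex.abs (z - a k))) :=
          mul_le_mul (factor_sub_one hz.le (haS k) hρ) (hgb z (mem_sphere_of_abs hz) k)
            (Complex.abs.nonneg _)
            (div_nonneg hρ.le (le_max_of_le_left hρ.le))
      _ = C * (ρ / max ρ (Complex.abs (z - a k)) * ω (Complex.abs (z - a k))) := by ring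
      _ ≤ C * ω (Real.sqrt ρ) := mul_le_mul_of_nonneg_left
          (key1 ω hρ hρ1 (Complex.abs.nonneg _) (abs_sub_le_two hz (haS k))) hC0
  calc Complex.abs (phiP a ρ z - 1) * Complex.abs (g z)
      ≤ (∑ k, Complex.abs ((z * (starRingEnd ℂ) (a k) - 1) /
          (z * (starRingEnd ℂ) (a k) - 1 - (ρ:ℂ)) - 1)) * Complex.abs (g z) :=
        mul_le_mul_of_nonneg_right t1 (Complex.abs.nonneg _)
    _ = ∑ k, Complex.abs ((z * (starRingEnd ℂ) (a k) - 1) /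
          (z * (starRingEnd ℂ) (a k) - 1 - (ρ:ℂ)) - 1) * Complex.abs (g z) :=
        Finset.sum_mul _ _ _
    _ ≤ ∑ _k : Fin (K + 1), C * ω (Real.sqrt ρ) := Finset.sum_le_sum (fun k _ => pk k)
    _ = ((K:ℝ) + 1) * (C * ω (Real.sqrt ρ)) := by
        rw [Finset.sum_const, Finset.card_univ, Fintype.card_fin, nsmul_eq_mul]
        push_cast; ring

end FPA

/-- **Lemma (lem3).** For `g ∈ J_ω(E)` and finitely many points `a_0,…,a_K ∈ E`,
`‖φ_{ρ,K}·g - g‖_ω → 0` as `ρ → 0⁺`, where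
`φ_{ρ,K}(z) = ∏_k (z·conj(a_k) - 1)/(z·conj(a_k) - 1 - ρ)`. -/
theorem finite_point_approximation
    (ω : ModulusOfContinuity)
    (E : Set ℂ) (hEsub : E ⊆ sphere (0:ℂ) 1) (hEclosed : IsClosed E)
    (g : ℂ → ℂ) (hg : MemJ ω E g)
    (K : ℕ) (a : Fin (K + 1) → ℂ) (ha : ∀ k, a k ∈ E) :
    Tendsto (fun ρ : ℝ => lipNorm ω (fun z =>
        (∏ k, (z * (starRingEnd ℂ) (a k) - 1) / (z * (starRingEnd ℂ) (a k) - 1 - (ρ : ℂ))) *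
          g z - g z))
      (nhdsWithin 0 (Set.Ioi 0)) (nhds 0) := by
  classical
  obtain ⟨⟨⟨gcont, gdiff, C0, hC00⟩, gzero⟩, gJ⟩ := hg
  set C : ℝ := max C0 1 with hCdef
  have hC1 : (1:ℝ) ≤ C := le_max_right _ _
  have hCpos : (0:ℝ) < C := by linarith
  have haS : ∀ k, Complex.abs (a k) = 1 := fun k => FPA.abs_of_mem_sphere (hEsub (ha k))
  have hsph : ∀ x ∈ sphere (0:ℂ) 1, Complex.abs x = 1 := fun x hx => FPA.abs_of_mem_sphere hx
  have hC : ∀ ξ ∈ sphere (0:ℂ) 1, ∀ ζ ∈ sphere (0:ℂ) 1,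
      Complex.abs (g ξ - g ζ) ≤ C * ω (Complex.abs (ξ - ζ)) := by
    intro ξ hξ ζ hζ
    by_cases h : ξ = ζ
    · subst h
      simp [sub_self, map_zero, ω.zero]
    · calc Complex.abs (g ξ - g ζ) ≤ C0 * ω (Complex.abs (ξ - ζ)) := hC00 ξ hξ ζ hζ h
        _ ≤ C * ω (Complex.abs (ξ - ζ)) := mul_le_mul_of_nonneg_right (le_max_left _ _)
            (FPA.om_nonneg ω (Complex.abs.nonneg _)
              (FPA.abs_sub_le_two (hsph ξ hξ) (hsph ζ hζ)))
  have hgb : ∀ ζ ∈ sphere (0:ℂ) 1, ∀ k,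
      Complex.abs (g ζ) ≤ C * ω (Complex.abs (ζ - a k)) := by
    intro ζ hζ k
    have h := hC ζ hζ (a k) (hEsub (ha k))
    rwa [gzero (a k) (ha k), sub_zero] at h
  rw [Metric.tendsto_nhdsWithin_nhds]
  intro ε hε
  set Kr : ℝ := (K:ℝ) + 1 with hKrdef
  have hKr1 : (1:ℝ) ≤ Kr := by
    rw [hKrdef]; have : (0:ℝ) ≤ (K:ℝ) := Nat.cast_nonneg K; linarith
  have hKr0 : (0:ℝ) < Kr := by linarith
  set ε1 : ℝ := ε / (16 * Kr) with hε1def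
  have hε1 : 0 < ε1 := by rw [hε1def]; positivity
  obtain ⟨δ0, hδ0, hJ0⟩ := gJ ε1 hε1
  set δ : ℝ := min δ0 1 with hδdef
  have hδ : 0 < δ := lt_min hδ0 one_pos
  have hδ1 : δ ≤ 1 := min_le_right _ _
  have hJ : ∀ p ∈ ENbhd E δ, ∀ q ∈ ENbhd E δ,
      Complex.abs (g p - g q) ≤ ε1 * ω (Complex.abs (p - q)) := by
    intro p hp q hq
    by_cases h : p = q
    · subst h
      simp [sub_self, map_zero, ω.zero]
    · exact hJ0 p ⟨hp.1, hp.2.trans (min_le_left _ _)⟩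
        q ⟨hq.1, hq.2.trans (min_le_left _ _)⟩ h
  set P : ℝ := ω (δ / 2) with hPdef
  have hP : 0 < P := FPA.om_pos ω (by linarith) (by linarith)
  set m : ℝ := min (ε / (8 * Kr * C)) (ε * δ * P / (16 * Kr * C)) with hmdef
  have hm : 0 < m := lt_min (by positivity) (by positivity)
  obtain ⟨τ, hτ0, hτ⟩ := Metric.continuousWithinAt_iff.1
    (ω.cont 0 ⟨le_refl 0, by norm_num⟩) m hm
  refine ⟨min (τ^2) (min 1 (ε * δ / (16 * Kr * C))), by positivity, ?_⟩
  intro ρ hρmem hρd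
  have hρ : 0 < ρ := hρmem
  rw [Real.dist_eq, sub_zero, abs_of_pos hρ] at hρd
  have hρ1 : ρ ≤ 1 := le_of_lt (lt_of_lt_of_le hρd
    (le_trans (min_le_right _ _) (min_le_left _ _)))
  have hρτ : Real.sqrt ρ < τ := by
    have h := lt_of_lt_of_le hρd (min_le_left _ _)
    calc Real.sqrt ρ < Real.sqrt (τ^2) := Real.sqrt_lt_sqrt hρ.le h
      _ = τ := Real.sqrt_sq hτ0.le
  set Q : ℝ := ω (Real.sqrt ρ) with hQdef
  have hsq2 : Real.sqrt ρ ∈ Set.Icc (0:ℝ) 2 := by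
    refine ⟨Real.sqrt_nonneg _, ?_⟩
    calc Real.sqrt ρ ≤ Real.sqrt 1 := Real.sqrt_le_sqrt hρ1
      _ ≤ 2 := by rw [Real.sqrt_one]; norm_num
  have hQm : Q < m := by
    have h := hτ hsq2 (by
      rw [Real.dist_eq, sub_zero, _root_.abs_of_nonneg (Real.sqrt_nonneg _)]; exact hρτ)
    rw [Real.dist_eq, ω.zero, sub_zero] at h
    exact lt_of_le_of_lt (le_abs_self _) h
  have hQ0 : 0 ≤ Q := FPA.om_nonneg ω hsq2.1 hsq2.2
  have hρsm : ρ < ε * δ / (16 * Kr * C) := lt_of_lt_of_le hρd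
    (le_trans (min_le_right _ _) (min_le_right _ _))
  have hFeq : ∀ z : ℂ, (∏ k, (z * (starRingEnd ℂ) (a k) - 1) /
      (z * (starRingEnd ℂ) (a k) - 1 - (ρ:ℂ))) * g z - g z
      = (FPA.phiP a ρ z - 1) * g z := by
    intro z; rw [FPA.phiP]; ring
  -- differentiability and continuity
  have hdc : DiffContOnCl ℂ (fun z => (∏ k, (z * (starRingEnd ℂ) (a k) - 1) /
      (z * (starRingEnd ℂ) (a k) - 1 - (ρ:ℂ))) * g z - g z) (ball (0:ℂ) 1) := by
    constructor
    · apply DifferentiableOn.sub _ gdiff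
      apply DifferentiableOn.mul _ gdiff
      apply DifferentiableOn.fun_finsetProd
      intro k _
      apply DifferentiableOn.div
      · exact ((differentiable_id.mul_const ((starRingEnd ℂ) (a k))).sub
          (differentiable_const 1)).differentiableOn
      · exact (((differentiable_id.mul_const ((starRingEnd ℂ) (a k))).sub
          (differentiable_const 1)).sub (differentiable_const ((ρ:ℂ)))).differentiableOn
      · intro z hz
        have hz1 : Complex.abs z ≤ 1 := by
          rw [mem_ball, Complex.dist_eq, sub_zero] at hz
          exact hz.le
        exact FPA.denom_ne hz1 (haS k) hρ
    · rw [closure_ball (0:ℂ) one_ne_zero]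
      apply ContinuousOn.sub _ gcont
      apply ContinuousOn.mul _ gcont
      apply continuousOn_finset_prod
      intro k _
      apply ContinuousOn.div
      · exact ((continuous_id.mul continuous_const).sub continuous_const).continuousOn
      · exact (((continuous_id.mul continuous_const).sub continuous_const).sub
          continuous_const).continuousOn
      · intro z hz
        have hz1 : Complex.abs z ≤ 1 := by
          rw [mem_closedBall, Complex.dist_eq, sub_zero] at hz
          exact hz
        exact FPA.denom_ne hz1 (haS k) hρ
  -- sup norm bound
  have hsup : supNorm (fun z => (∏ k, (z * (starRingEnd ℂ) (a k) - 1) /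
      (z * (starRingEnd ℂ) (a k) - 1 - (ρ:ℂ))) * g z - g z) ≤ Kr * (C * Q) := by
    apply Real.sSup_le
    · rintro x ⟨z, hz, rfl⟩
      have hnorm := Complex.norm_le_of_forall_mem_frontier_norm_le isBounded_ball hdc
        (C := Kr * (C * Q)) ?_ (z := z) ?_
      · simpa [Complex.norm_eq_abs] using hnorm
      · intro w hw
        rw [frontier_ball (0:ℂ) one_ne_zero] at hw
        show ‖_‖ ≤ _
        rw [Complex.norm_eq_abs]
        rw [hFeq w]
        exact FPA.bdry_bound ω haS hCpos.le hρ hρ1 hgb (hsph w hw)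
      · rw [closure_ball (0:ℂ) one_ne_zero]; exact hz
    · positivity
  -- Lipschitz seminorm bound
  set A : ℝ := 4 * Kr * ε1 + Kr * (2 * C * (ρ / δ)) + Kr * (2 * C * Q / (δ * P)) with hAdef
  have hA0 : 0 ≤ A := by
    rw [hAdef]
    have h1 : (0:ℝ) ≤ 4 * Kr * ε1 := by positivity
    have h2 : (0:ℝ) ≤ Kr * (2 * C * (ρ / δ)) := by positivity
    have h3 : (0:ℝ) ≤ Kr * (2 * C * Q / (δ * P)) :=
      mul_nonneg hKr0.le (div_nonneg (by positivity) (by positivity))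
    exact add_nonneg (add_nonneg h1 h2) h3
  have hsemi : lipSemi ω (fun z => (∏ k, (z * (starRingEnd ℂ) (a k) - 1) /
      (z * (starRingEnd ℂ) (a k) - 1 - (ρ:ℂ))) * g z - g z) ≤ A := by
    apply Real.sSup_le
    · rintro x ⟨⟨p, q⟩, ⟨hp, hq, hpq⟩, rfl⟩
      simp only
      have hd0 : 0 < Complex.abs (p - q) := Complex.abs.pos (sub_ne_zero.2 hpq)
      have hd2 : Complex.abs (p - q) ≤ 2 := FPA.abs_sub_le_two (hsph p hp) (hsph q hq)
      rw [div_le_iff₀ (show 0 < ω ‖p - q‖ from FPA.om_pos ω hd0 hd2)]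
      rw [hFeq p, hFeq q]
      refine le_trans (FPA.pair_main ω ha haS hCpos.le hε1.le hδ hδ1 hρ hρ1 hC hgb hJ
        (fun k => gzero (a k) (ha k)) (hsph p hp) (hsph q hq) hpq) ?_
      apply mul_le_mul_of_nonneg_right _ (FPA.om_nonneg ω hd0.le hd2)
      rw [hAdef]
      apply le_of_eq
      ring
    · exact hA0
  clear_value C Kr ε1 δ P m Q A
  -- nonnegativity of lipNorm
  have hln0 : 0 ≤ lipNorm ω (fun z => (∏ k, (z * (starRingEnd ℂ) (a k) - 1) /
      (z * (starRingEnd ℂ) (a k) - 1 - (ρ:ℂ))) * g z - g z) := by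
    apply add_nonneg
    · apply Real.sSup_nonneg
      rintro x ⟨z, hz, rfl⟩
      exact Complex.abs.nonneg _
    · apply Real.sSup_nonneg
      rintro x ⟨⟨p, q⟩, ⟨hp, hq, hpq⟩, rfl⟩
      exact div_nonneg (Complex.abs.nonneg _)
        (FPA.om_nonneg ω (Complex.abs.nonneg _)
          (FPA.abs_sub_le_two (hsph p hp) (hsph q hq)))
  rw [Real.dist_eq, sub_zero, _root_.abs_of_nonneg hln0]
  -- numeric bounds
  have h8KC : (0:ℝ) < 8 * Kr * C := mul_pos (mul_pos (by norm_num) hKr0) hCpos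
  have h16KC : (0:ℝ) < 16 * Kr * C := mul_pos (mul_pos (by norm_num) hKr0) hCpos
  have hQ1 : Q * (8 * Kr * C) < ε := by
    have h : Q < ε / (8 * Kr * C) :=
      lt_of_lt_of_le hQm (by rw [hmdef]; exact min_le_left _ _)
    rwa [lt_div_iff₀ h8KC] at h
  have hQ2 : Q * (16 * Kr * C) < ε * δ * P := by
    have h : Q < ε * δ * P / (16 * Kr * C) :=
      lt_of_lt_of_le hQm (by rw [hmdef]; exact min_le_right _ _)
    rwa [lt_div_iff₀ h16KC] at h
  have hρ2 : ρ * (16 * Kr * C) < ε * δ := by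
    rwa [lt_div_iff₀ h16KC] at hρsm
  have hb1 : Kr * (C * Q) < ε / 8 := by linarith only [hQ1]
  have hb2 : 4 * Kr * ε1 = ε / 4 := by
    rw [hε1def]
    field_simp
    ring
  have hb3 : Kr * (2 * C * (ρ / δ)) < ε / 8 := by
    have h : Kr * (2 * C * (ρ / δ)) = Kr * 2 * C * ρ / δ := by ring
    rw [h, div_lt_iff₀ hδ]
    linarith only [hρ2]
  have hb4 : Kr * (2 * C * Q / (δ * P)) < ε / 8 := by
    have h : Kr * (2 * C * Q / (δ * P)) = Kr * 2 * C * Q / (δ * P) := by ring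
    rw [h, div_lt_iff₀ (mul_pos hδ hP)]
    linarith only [hQ2]
  have hεfinal : Kr * (C * Q) + A < ε := by
    rw [hAdef, hb2]
    linarith only [hb1, hb3, hb4, hε]
  exact lt_of_le_of_lt (add_le_add hsup hsemi) hεfinal
end
end
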